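/- arXiv:2508.00345 — 2 statements merged into one kernel-verified Lean document; each statement's English description precedes it below -/
import Mathlib

section
/- The oligopsony markdown μ(x) = θ·(1−(1−x)^{1/θ})/x is (weakly) decreasing in x on (0,1] for any fixed θ ∈ (0,1]. -/
/-- The oligopsony markdown `μ(x) = θ·(1−(1−x)^{1/θ})/x` is weakly decreasing
in `x` on `(0,1]` for any fixed `θ ∈ (0,1]`. -/
theorem oligopsony_markdown_antitoneOn (θ : ℝ) (hθ : θ ∈ Set.Ioc (0 : ℝ) 1) :
    AntitoneOn (fun x : ℝ => θ * (1 - (1 - x) ^ (1 / θ)) / x) (Set.Ioc 0 1) := by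
  obtain ⟨hθ0, hθ1⟩ := hθ
  intro a ha b hb hab
  obtain ⟨ha0, ha1⟩ := ha
  obtain ⟨hb0, hb1⟩ := hb
  set p := 1 / θ with hpdef
  have hp : 1 ≤ p := one_le_one_div hθ0 hθ1
  have hcv := convexOn_rpow hp
  have hw1 : (0:ℝ) ≤ a / b := div_nonneg ha0.le hb0.le
  have hab1 : a / b ≤ 1 := (div_le_one hb0).mpr hab
  have key := hcv.2 (show (1:ℝ) - b ∈ Set.Ici (0:ℝ) by simp [hb1])
      (show (1:ℝ) ∈ Set.Ici (0:ℝ) by norm_num) hw1 (show (0:ℝ) ≤ 1 - a / b by linarith) (by ring)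
  simp only [smul_eq_mul, mul_one, Real.one_rpow] at key
  have hcomb : a / b * (1 - b) + (1 - a / b) = 1 - a := by
    field_simp
    ring
  rw [hcomb] at key
  -- key : (1 - a) ^ p ≤ a / b * (1 - b) ^ p + (1 - a / b)
  have hkey' : b * (1 - a) ^ p ≤ a * (1 - b) ^ p + (b - a) := by
    have := mul_le_mul_of_nonneg_left key hb0.le
    have hb' : b * (a / b * (1 - b) ^ p + (1 - a / b)) = a * (1 - b) ^ p + (b - a) := by
      field_simp
    linarith [hb' ▸ this]
  rw [div_le_div_iff₀ hb0 ha0]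
  nlinarith [hkey']
end

section
/- For ρ > η > 1 and s ∈ (0,1), the leverage term λ(s) = s·(η−1)/((1 − (1−s)^{(η−1)/(ρ−1)})·(ε(s)−1)) with ε(s) = ρ(1−s)+ηs satisfies λ(s) ≥ 1. -/
/-- For `ρ > η > 1` and `s ∈ (0,1)`, the leverage term
`λ(s) = s(η−1)/((1−(1−s)^{(η−1)/(ρ−1)})(ε(s)−1))`, with `ε(s) = ρ(1−s)+ηs`,
satisfies `λ(s) ≥ 1`. -/
theorem leverage_ge_one (ρ η s : ℝ) (hρη : η < ρ) (hη : 1 < η)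
    (hs : s ∈ Set.Ioo (0 : ℝ) 1) :
    1 ≤ s * (η - 1) /
        ((1 - (1 - s) ^ ((η - 1) / (ρ - 1))) * ((ρ * (1 - s) + η * s) - 1)) := by
  obtain ⟨hs0, hs1⟩ := hs
  set θ : ℝ := (η - 1) / (ρ - 1) with hθdef
  have ha : (0:ℝ) < ρ - 1 := by linarith
  have hb : (0:ℝ) < η - 1 := by linarith
  have hθ0 : 0 < θ := div_pos hb ha
  have hθ1 : θ < 1 := (div_lt_one ha).2 (by linarith)
  have hx0 : (0:ℝ) < 1 - s := by linarith
  have hx1 : (1:ℝ) - s < 1 := by linarith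
  have hxθ : (1 - s) ^ θ < 1 := Real.rpow_lt_one hx0.le hx1 hθ0
  have hxθ0 : 0 < (1 - s) ^ θ := Real.rpow_pos_of_pos hx0 θ
  have key : (1 - s) ^ (1 - θ) ≤ (1 - θ) * (1 - s) + θ * 1 := by
    calc (1 - s) ^ (1 - θ) = (1 - s) ^ (1 - θ) * (1:ℝ) ^ θ := by
          rw [Real.one_rpow, mul_one]
    _ ≤ (1 - θ) * (1 - s) + θ * 1 :=
        Real.geom_mean_le_arith_mean2_weighted (by linarith) hθ0.le hx0.le zero_le_one
          (by ring)
  have hxX : (1 - s) * (1 - s) ^ θ = (1 - s) ^ (1 + θ) := by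
    rw [Real.rpow_add hx0, Real.rpow_one]
  have key2 : (1 - s) ≤ (1 - θ) * (1 - s) ^ (1 + θ) + θ * (1 - s) ^ θ := by
    have h1 : (1 - s) = (1 - s) ^ (1 - θ) * (1 - s) ^ θ := by
      rw [← Real.rpow_add hx0]; norm_num
    calc (1 - s) = (1 - s) ^ (1 - θ) * (1 - s) ^ θ := h1
    _ ≤ ((1 - θ) * (1 - s) + θ * 1) * (1 - s) ^ θ :=
        mul_le_mul_of_nonneg_right key hxθ0.le
    _ = (1 - θ) * ((1 - s) * (1 - s) ^ θ) + θ * (1 - s) ^ θ := by ring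
    _ = (1 - θ) * (1 - s) ^ (1 + θ) + θ * (1 - s) ^ θ := by rw [hxX]
  have hθa : η - 1 = θ * (ρ - 1) := by
    rw [hθdef, div_mul_cancel₀ _ ha.ne']
  have hεpos : 0 < (ρ * (1 - s) + η * s) - 1 := by nlinarith
  have hden : 0 < (1 - (1 - s) ^ θ) * ((ρ * (1 - s) + η * s) - 1) :=
    mul_pos (by linarith) hεpos
  rw [one_le_div hden]
  have h2 : (ρ - 1) * (1 - s) ≤
      (ρ - 1) * ((1 - θ) * (1 - s) ^ (1 + θ) + θ * (1 - s) ^ θ) :=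
    mul_le_mul_of_nonneg_left key2 ha.le
  have h3 : (ρ - 1) * (1 - s) ≤
      (ρ - 1) * (1 - s) ^ (1 + θ) - (η - 1) * (1 - s) ^ (1 + θ)
        + (η - 1) * (1 - s) ^ θ := by
    calc (ρ - 1) * (1 - s) ≤ (ρ - 1) * ((1 - θ) * (1 - s) ^ (1 + θ) + θ * (1 - s) ^ θ) := h2
    _ = (ρ - 1) * (1 - s) ^ (1 + θ) - (θ * (ρ - 1)) * (1 - s) ^ (1 + θ)
        + (θ * (ρ - 1)) * (1 - s) ^ θ := by ring
    _ = _ := by rw [← hθa]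
  have hsX : s * (1 - s) ^ θ = (1 - s) ^ θ - (1 - s) ^ (1 + θ) := by
    linear_combination -hxX
  have e1 : (1 - (1 - s) ^ θ) * ((ρ * (1 - s) + η * s) - 1) =
      (ρ * (1 - s) + η * s - 1) - ρ * (1 - s) ^ (1 + θ)
        - η * ((1 - s) ^ θ - (1 - s) ^ (1 + θ)) + (1 - s) ^ θ := by
    linear_combination (-ρ) * hxX - η * hsX
  rw [e1]
  nlinarith [h3]
end
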